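/- Let Y be a nonempty Baire space and ν : Y → [0, ∞) a function for which there is a comeagre subset C ⊆ Y such that ν is lower semicontinuous at every point of C. Then the following are equivalent: (1) the set {y ∈ Y : ν(y) ≠ 0} is meagre; (2) the set {y ∈ Y : ν(y) ≠ 0} has empty interior; (3) for every ε > 0 the set {y ∈ Y : ν(y) > ε} has empty interior. -/

import Mathlib

/-- Let `Y` be a nonempty Baire space and `ν : Y → [0, ∞)` a function
that is lower semicontinuous at every point of some comeagre subset `C ⊆ Y`.  Then the
following are equivalent: (1) `{ν ≠ 0}` is meagre; (2) `{ν ≠ 0}` has empty interior;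
(3) for every `ε > 0` the set `{ν > ε}` has empty interior. -/
theorem meagre_iff_empty_interior_of_ae_lowerSemicontinuous
    {Y : Type*} [TopologicalSpace Y] [BaireSpace Y] [Nonempty Y]
    (ν : Y → ℝ) (hν : ∀ y : Y, 0 ≤ ν y)
    (C : Set Y) (hC : IsMeagre Cᶜ)
    (hlsc : ∀ y ∈ C, LowerSemicontinuousAt ν y) :
    (IsMeagre {y : Y | ν y ≠ 0} ↔ interior {y : Y | ν y ≠ 0} = ∅) ∧
    (interior {y : Y | ν y ≠ 0} = ∅ ↔ ∀ ε : ℝ, 0 < ε → interior {y : Y | ε < ν y} = ∅) := by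
  -- meagre sets have empty interior in a Baire space
  have meagre_int : ∀ s : Set Y, IsMeagre s → interior s = ∅ := by
    intro s hs
    rw [interior_eq_empty_iff_dense_compl]
    exact dense_of_mem_residual hs
  -- (3) implies (1)
  have h31 : (∀ ε : ℝ, 0 < ε → interior {y : Y | ε < ν y} = ∅) →
      IsMeagre {y : Y | ν y ≠ 0} := by
    intro h3
    -- each {ν > ε} with empty interior is contained in Cᶜ, hence meagre
    have key : ∀ ε : ℝ, 0 < ε → {y : Y | ε < ν y} ⊆ Cᶜ := by
      intro ε hε y hy hyC
      have := hlsc y hyC ε hy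
      have : {y : Y | ε < ν y} ∈ nhds y := this
      have : y ∈ interior {y : Y | ε < ν y} := mem_interior_iff_mem_nhds.2 this
      rw [h3 ε hε] at this
      exact this
    have hcover : {y : Y | ν y ≠ 0} ⊆ ⋃ n : ℕ, {y : Y | 1 / (n + 1) < ν y} := by
      intro y hy
      have hpos : 0 < ν y := lt_of_le_of_ne (hν y) (Ne.symm hy)
      obtain ⟨n, hn⟩ := exists_nat_one_div_lt hpos
      exact Set.mem_iUnion.2 ⟨n, hn⟩
    refine IsMeagre.mono hcover (isMeagre_iUnion fun n => ?_)
    exact hC.mono (key _ (by positivity))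
  have h23 : interior {y : Y | ν y ≠ 0} = ∅ →
      ∀ ε : ℝ, 0 < ε → interior {y : Y | ε < ν y} = ∅ := by
    intro h2 ε hε
    have hsub : {y : Y | ε < ν y} ⊆ {y : Y | ν y ≠ 0} := fun y hy =>
      ne_of_gt (lt_of_le_of_lt hε.le hy)
    exact Set.eq_empty_of_subset_empty (h2 ▸ interior_mono hsub)
  refine ⟨⟨fun h1 => meagre_int _ h1, fun h2 => h31 (h23 h2)⟩,
    ⟨h23, fun h3 => meagre_int _ (h31 h3)⟩⟩
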